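/- Let φ be an exponential map on a k-domain B and S a multiplicative subset of B^φ \ {0}. Then φ extends to an exponential map S⁻¹φ on S⁻¹B defined by S⁻¹φ(a/s) = φ(a)/s, and the ring of invariants of S⁻¹φ equals S⁻¹(B^φ). Moreover, if φ is non-trivial then S⁻¹φ is non-trivial. -/

import Mathlib

open Polynomial in
structure ExpMap (k B : Type*) [CommRing k] [CommRing B] [Algebra k B] where
  toAlgHom : B →ₐ[k] Polynomial B
  eval_zero : ∀ b, (toAlgHom b).eval 0 = b
  coassoc : ∀ b, (toAlgHom b).map toAlgHom.toRingHom =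
      Polynomial.eval₂ ((C : Polynomial B →+* Polynomial (Polynomial B)).comp
        (C : B →+* Polynomial B)) (C X + X) (toAlgHom b)

noncomputable def ExpMap.invariants {k B : Type*} [CommRing k] [CommRing B] [Algebra k B]
    (φ : ExpMap k B) : Subalgebra k B :=
  AlgHom.equalizer φ.toAlgHom (Polynomial.CAlgHom)

open Polynomial

/-- An exponential map φ on a k-domain B extends to the localization S⁻¹B at a
multiplicative set S ⊆ B^φ \ {0}, via S⁻¹φ(a/s) = φ(a)/s; its invariant ring is
S⁻¹(B^φ), and it is non-trivial if φ is. -/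
theorem expMap_localization
    {k B L : Type*} [Field k] [CommRing B] [IsDomain B] [Algebra k B]
    [CommRing L] [Algebra B L] [Algebra k L] [IsScalarTower k B L]
    (φ : ExpMap k B) (S : Submonoid B)
    (hS : (S : Set B) ⊆ (φ.invariants : Set B)) (h0 : (0 : B) ∉ S)
    [IsLocalization S L] :
    ∃ ψ : ExpMap k L,
      (∀ a : B, ψ.toAlgHom (algebraMap B L a)
          = (φ.toAlgHom a).map (algebraMap B L)) ∧
      (∀ x : L, x ∈ ψ.invariants ↔
          ∃ a ∈ φ.invariants, ∃ s ∈ S, x * algebraMap B L s = algebraMap B L a) ∧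
      (φ.invariants ≠ ⊤ → ψ.invariants ≠ ⊤) := by
  classical
  have hSnzd : S ≤ nonZeroDivisors B := by
    intro s hs
    exact mem_nonZeroDivisors_of_ne_zero (fun h => h0 (h ▸ hs))
  have hinj : Function.Injective (algebraMap B L) := IsLocalization.injective L hSnzd
  -- the candidate map on B
  set f : B →ₐ[k] Polynomial L :=
    (Polynomial.mapAlgHom (IsScalarTower.toAlgHom k B L)).comp φ.toAlgHom with hf
  have hfa : ∀ a : B, f a = (φ.toAlgHom a).map (algebraMap B L) := fun a => rfl
  have hCinv : ∀ s ∈ S, φ.toAlgHom s = C s := fun s hs => hS hs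
  have hunit : ∀ s : S, IsUnit (f s) := by
    intro s
    rw [hfa, hCinv s s.2, map_C]
    exact (IsLocalization.map_units L s).map (C : L →+* Polynomial L)
  set ψh : L →ₐ[k] Polynomial L := IsLocalization.liftAlgHom hunit with hψh
  have key : ∀ a : B, ψh (algebraMap B L a) = (φ.toAlgHom a).map (algebraMap B L) := by
    intro a
    rw [hψh, IsLocalization.liftAlgHom_apply, IsLocalization.lift_eq]
    exact hfa a
  have keyC : ∀ s ∈ S, ψh (algebraMap B L s) = C (algebraMap B L s) := by
    intro s hs
    rw [key, hCinv s hs, map_C]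
  have hmap0 : ∀ p : Polynomial B, (p.map (algebraMap B L)).eval 0 = algebraMap B L (p.eval 0) := by
    intro p
    rw [eval_map, eval₂_at_zero, coeff_zero_eq_eval_zero]
  -- eval at zero
  have hev : ∀ x : L, (ψh x).eval 0 = x := by
    have h : ((evalRingHom (0 : L)).comp ψh.toRingHom).comp (algebraMap B L)
        = (RingHom.id L).comp (algebraMap B L) := by
      ext a
      show (ψh (algebraMap B L a)).eval 0 = algebraMap B L a
      rw [key, hmap0, φ.eval_zero]
    have := IsLocalization.ringHom_ext S h
    intro x
    exact RingHom.congr_fun this x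
  -- coassociativity
  have hco : ∀ x : L, (ψh x).map ψh.toRingHom =
      Polynomial.eval₂ ((C : Polynomial L →+* Polynomial (Polynomial L)).comp
        (C : L →+* Polynomial L)) (C X + X) (ψh x) := by
    have hcomp : ψh.toRingHom.comp (algebraMap B L)
        = (mapRingHom (algebraMap B L)).comp φ.toAlgHom.toRingHom := by
      refine RingHom.ext fun a => ?_
      simpa using key a
    have h : ((mapRingHom ψh.toRingHom).comp ψh.toRingHom).comp (algebraMap B L)
        = ((eval₂RingHom ((C : Polynomial L →+* Polynomial (Polynomial L)).comp
            (C : L →+* Polynomial L)) (C X + X)).comp ψh.toRingHom).comp (algebraMap B L) := by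
      refine RingHom.ext fun a => ?_
      show ((ψh (algebraMap B L a)).map ψh.toRingHom) =
        Polynomial.eval₂ ((C : Polynomial L →+* Polynomial (Polynomial L)).comp
          (C : L →+* Polynomial L)) (C X + X) (ψh (algebraMap B L a))
      rw [key a]
      rw [Polynomial.map_map, hcomp, ← Polynomial.map_map, φ.coassoc]
      rw [Polynomial.eval₂_map]
      rw [show Polynomial.map (mapRingHom (algebraMap B L))
            (Polynomial.eval₂ ((C : Polynomial B →+* Polynomial (Polynomial B)).comp
              (C : B →+* Polynomial B)) (C X + X) (φ.toAlgHom a))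
          = (mapRingHom (mapRingHom (algebraMap B L)))
            (Polynomial.eval₂ ((C : Polynomial B →+* Polynomial (Polynomial B)).comp
              (C : B →+* Polynomial B)) (C X + X) (φ.toAlgHom a)) from rfl]
      rw [Polynomial.hom_eval₂]
      congr 1
      · ext b
        simp
      · simp
    have h2 := IsLocalization.ringHom_ext S h
    intro x
    have := RingHom.congr_fun h2 x
    simpa using this
  refine ⟨⟨ψh, hev, hco⟩, key, ?_, ?_⟩
  · -- invariants
    intro x
    constructor
    · intro hx
      have hx' : ψh x = C x := hx
      obtain ⟨⟨a, s⟩, rfl⟩ := IsLocalization.mk'_surjective S x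
      have hspec : IsLocalization.mk' L a s * algebraMap B L s = algebraMap B L a :=
        IsLocalization.mk'_spec L a s
      have ha : a ∈ φ.invariants := by
        have : (φ.toAlgHom a).map (algebraMap B L) = (C a).map (algebraMap B L) := by
          rw [← key, ← hspec, map_mul, hx', keyC s s.2, ← C_mul, map_C, hspec]
        exact (Polynomial.map_injective _ hinj this : φ.toAlgHom a = C a)
      exact ⟨a, ha, s, s.2, hspec⟩
    · rintro ⟨a, ha, s, hs, hx⟩
      have hu : IsUnit ((C : L →+* Polynomial L) (algebraMap B L s)) :=
        (IsLocalization.map_units L ⟨s, hs⟩).map (C : L →+* Polynomial L)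
      have ha' : φ.toAlgHom a = C a := ha
      have h1 : ψh x * C (algebraMap B L s) = C (algebraMap B L a) := by
        rw [← keyC s hs, ← map_mul, hx, key, ha', map_C]
      have h2 : C x * C (algebraMap B L s) = C (algebraMap B L a) := by
        rw [← C_mul, hx]
      exact (hu.mul_right_cancel (h1.trans h2.symm) : ψh x = C x)
  · -- non-triviality
    intro hne htop
    apply hne
    rw [eq_top_iff]
    intro b _
    have hb : algebraMap B L b ∈ (⟨ψh, hev, hco⟩ : ExpMap k L).invariants := by
      rw [htop]; trivial
    have hb' : ψh (algebraMap B L b) = C (algebraMap B L b) := hb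
    -- extract invariance of b
    have : (φ.toAlgHom b).map (algebraMap B L) = (C b).map (algebraMap B L) := by
      rw [← key, hb', map_C]
    have hbB : φ.toAlgHom b = C b := Polynomial.map_injective _ hinj this
    exact hbB
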